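/- arXiv:1005.1157 — 3 statements merged into one kernel-verified Lean document; each statement's English description precedes it below -/
import Mathlib

section
/- Let 𝔲* = ⟨α, β, γ, δ⟩ with dα = dβ = dδ = 0, dγ = -α∧β, and let the group {±1} act on 𝔲* by (-1)·α = -α, (-1)·β = -β, (-1)·γ = γ, (-1)·δ = δ, extended to Λ𝔲* as algebra automorphisms commuting with d. Then the second cohomology of the invariant subcomplex (Λ𝔲*)^{±1} vanishes: H²((Λ𝔲*)^{±1}) = 0. -/
open scoped BigOperators

/-- The `n`-fold wedge power of a `2`-form `β`, as a `2n`-multilinear expression: up to a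
nonzero constant, `β^n (v) = ∑_σ sign σ • ∏ᵢ β (v_{σ(2i)}, v_{σ(2i+1)})`. -/
noncomputable def wedgePow {V : Type*} (β : (Fin 2 → V) → ℝ) (n : ℕ)
    (v : Fin (n * 2) → V) : ℝ :=
  ∑ σ : Equiv.Perm (Fin (n * 2)),
    ((Equiv.Perm.sign σ : ℤ) : ℝ) *
      ∏ i : Fin n, β ![v (σ (finProdFinEquiv (i, 0))), v (σ (finProdFinEquiv (i, 1)))]

/-- `𝔲` is the Lie algebra `Fin 4 → ℝ` with bracket `c`; the conditions below express that
the dual basis `α, β, γ, δ` (coordinates `0,1,2,3`) satisfies `dα = dβ = dδ = 0` and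
`dγ = -α∧β` for the Chevalley–Eilenberg differential `(dφ)(x,y) = -φ [x,y]`. -/
def IsHeisenbergTimesLine (c : (Fin 4 → ℝ) →ₗ[ℝ] (Fin 4 → ℝ) →ₗ[ℝ] (Fin 4 → ℝ)) : Prop :=
  (∀ x, c x x = 0) ∧
  (∀ x y, c x y 0 = 0) ∧
  (∀ x y, c x y 1 = 0) ∧
  (∀ x y, c x y 3 = 0) ∧
  (∀ x y : Fin 4 → ℝ, -(c x y 2) = -(x 0 * y 1 - x 1 * y 0))

/-- The Chevalley–Eilenberg differential of a `2`-form `ω` vanishes: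
`(dω)(x,y,z) = -ω([x,y],z) + ω([x,z],y) - ω([y,z],x) = 0`. -/
def IsCEClosed {k : ℕ} (c : (Fin k → ℝ) →ₗ[ℝ] (Fin k → ℝ) →ₗ[ℝ] (Fin k → ℝ))
    (ω : (Fin k → ℝ) [⋀^Fin 2]→ₗ[ℝ] ℝ) : Prop :=
  ∀ x y z : Fin k → ℝ, -ω ![c x y, z] + ω ![c x z, y] - ω ![c y z, x] = 0

/-- The involution of `𝔲 = Fin 4 → ℝ` dual to the action of `-1 ∈ {±1}` on `𝔲*` given by
`α ↦ -α, β ↦ -β, γ ↦ γ, δ ↦ δ`: it negates the first two coordinates. -/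
def uInvolution (x : Fin 4 → ℝ) : Fin 4 → ℝ :=
  ![-(x 0), -(x 1), x 2, x 3]

/-- Let `𝔲* = ⟨α, β, γ, δ⟩` with `dα = dβ = dδ = 0`, `dγ = -α∧β`, and let `{±1}` act by
`(-1)·α = -α, (-1)·β = -β, (-1)·γ = γ, (-1)·δ = δ`, extended as algebra automorphisms
commuting with `d`. Then `H²` of the invariant subcomplex `(Λ𝔲*)^{±1}` vanishes: every
invariant closed `2`-form is the differential of an invariant `1`-form. -/
theorem invariant_H2_vanishes
    (c : (Fin 4 → ℝ) →ₗ[ℝ] (Fin 4 → ℝ) →ₗ[ℝ] (Fin 4 → ℝ))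
    (hc : IsHeisenbergTimesLine c)
    (hauto : ∀ x y : Fin 4 → ℝ, c (uInvolution x) (uInvolution y) = uInvolution (c x y)) :
    ∀ ω : (Fin 4 → ℝ) [⋀^Fin 2]→ₗ[ℝ] ℝ,
      (∀ x y : Fin 4 → ℝ, ω ![uInvolution x, uInvolution y] = ω ![x, y]) →
      IsCEClosed c ω →
      ∃ φ : (Fin 4 → ℝ) →ₗ[ℝ] ℝ,
        (∀ x : Fin 4 → ℝ, φ (uInvolution x) = φ x) ∧
        ∀ x y : Fin 4 → ℝ, ω ![x, y] = -(φ (c x y)) := by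

  intro ω hinv hclosed
  obtain ⟨-, hc0, hc1, hc3, hc2'⟩ := hc
  have hc2 : ∀ x y : Fin 4 → ℝ, c x y 2 = x 0 * y 1 - x 1 * y 0 := by
    intro x y; have := hc2' x y; linarith
  -- basis vectors
  set b0 : Fin 4 → ℝ := ![1,0,0,0] with hb0
  set b1 : Fin 4 → ℝ := ![0,1,0,0] with hb1
  set b2 : Fin 4 → ℝ := ![0,0,1,0] with hb2
  set b3 : Fin 4 → ℝ := ![0,0,0,1] with hb3
  -- update lemmas
  have hup0 : ∀ (a b z : Fin 4 → ℝ), Function.update ![a, b] 0 z = ![z, b] := by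
    intro a b z; funext i; fin_cases i <;> simp [Function.update]
  have hup1 : ∀ (a b z : Fin 4 → ℝ), Function.update ![a, b] 1 z = ![a, z] := by
    intro a b z; funext i; fin_cases i <;> simp [Function.update]
  -- multilinearity in each slot
  have hadd1 : ∀ x x' y : Fin 4 → ℝ, ω ![x + x', y] = ω ![x, y] + ω ![x', y] := by
    intro x x' y
    have := ω.map_update_add ![x, y] 0 x x'
    rwa [hup0, hup0, hup0] at this
  have hadd2 : ∀ x y y' : Fin 4 → ℝ, ω ![x, y + y'] = ω ![x, y] + ω ![x, y'] := by
    intro x y y'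
    have := ω.map_update_add ![x, y] 1 y y'
    rwa [hup1, hup1, hup1] at this
  have hsmul1 : ∀ (r : ℝ) (x y : Fin 4 → ℝ), ω ![r • x, y] = r * ω ![x, y] := by
    intro r x y
    have := ω.map_update_smul ![x, y] 0 r x
    rwa [hup0, hup0] at this
  have hsmul2 : ∀ (r : ℝ) (x y : Fin 4 → ℝ), ω ![x, r • y] = r * ω ![x, y] := by
    intro r x y
    have := ω.map_update_smul ![x, y] 1 r y
    rwa [hup1, hup1] at this
  have hself : ∀ x : Fin 4 → ℝ, ω ![x, x] = 0 := by
    intro x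
    exact ω.map_eq_zero_of_eq ![x, x] (by simp) (by decide : (0 : Fin 2) ≠ 1)
  have hskew : ∀ x y : Fin 4 → ℝ, ω ![y, x] = -ω ![x, y] := by
    intro x y
    have h := hself (x + y)
    rw [hadd1, hadd2, hadd2, hself, hself] at h
    linarith
  -- basis expansion
  have hx : ∀ x : Fin 4 → ℝ, x = x 0 • b0 + x 1 • b1 + x 2 • b2 + x 3 • b3 := by
    intro x; funext i; fin_cases i <;>
      simp [hb0, hb1, hb2, hb3] <;> ring
  have expand1 : ∀ x y : Fin 4 → ℝ,
      ω ![x, y] = x 0 * ω ![b0, y] + x 1 * ω ![b1, y] + x 2 * ω ![b2, y]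
        + x 3 * ω ![b3, y] := by
    intro x y
    have h : (![x, y] : Fin 2 → Fin 4 → ℝ)
        = ![x 0 • b0 + x 1 • b1 + x 2 • b2 + x 3 • b3, y] := by rw [← hx x]
    rw [h, hadd1, hadd1, hadd1, hsmul1, hsmul1, hsmul1, hsmul1]
  have expand2 : ∀ x y : Fin 4 → ℝ,
      ω ![x, y] = y 0 * ω ![x, b0] + y 1 * ω ![x, b1] + y 2 * ω ![x, b2]
        + y 3 * ω ![x, b3] := by
    intro x y
    have h : (![x, y] : Fin 2 → Fin 4 → ℝ)
        = ![x, y 0 • b0 + y 1 • b1 + y 2 • b2 + y 3 • b3] := by rw [← hx y]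
    rw [h, hadd2, hadd2, hadd2, hsmul2, hsmul2, hsmul2, hsmul2]
  -- involution on basis vectors
  have hu0 : uInvolution b0 = (-1 : ℝ) • b0 := by
    funext i; fin_cases i <;> simp [uInvolution, hb0]
  have hu1 : uInvolution b1 = (-1 : ℝ) • b1 := by
    funext i; fin_cases i <;> simp [uInvolution, hb1]
  have hu2 : uInvolution b2 = b2 := by
    funext i; fin_cases i <;> simp [uInvolution, hb2]
  have hu3 : uInvolution b3 = b3 := by
    funext i; fin_cases i <;> simp [uInvolution, hb3]
  -- invariance kills mixed terms
  have hv02 : ω ![b0, b2] = 0 := by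
    have h := hinv b0 b2; rw [hu0, hu2, hsmul1] at h; linarith
  have hv03 : ω ![b0, b3] = 0 := by
    have h := hinv b0 b3; rw [hu0, hu3, hsmul1] at h; linarith
  have hv12 : ω ![b1, b2] = 0 := by
    have h := hinv b1 b2; rw [hu1, hu2, hsmul1] at h; linarith
  have hv13 : ω ![b1, b3] = 0 := by
    have h := hinv b1 b3; rw [hu1, hu3, hsmul1] at h; linarith
  -- bracket values
  have hcb01 : c b0 b1 = b2 := by
    funext i; fin_cases i <;>
      simp [hc0, hc1, hc2, hc3, hb0, hb1, hb2]
  have hcb03 : c b0 b3 = (0 : ℝ) • b0 := by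
    funext i; fin_cases i <;>
      simp [hc0, hc1, hc2, hc3, hb0, hb3]
  have hcb13 : c b1 b3 = (0 : ℝ) • b0 := by
    funext i; fin_cases i <;>
      simp [hc0, hc1, hc2, hc3, hb1, hb3]
  -- closedness kills ω(b2, b3)
  have hv23 : ω ![b2, b3] = 0 := by
    have h := hclosed b0 b1 b3
    rw [hcb01, hcb03, hcb13, hsmul1, hsmul1] at h
    linarith
  set A : ℝ := ω ![b0, b1] with hA
  have key : ∀ x y : Fin 4 → ℝ, ω ![x, y] = A * (x 0 * y 1 - x 1 * y 0) := by
    intro x y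
    rw [expand1 x y, expand2 b0 y, expand2 b1 y, expand2 b2 y, expand2 b3 y]
    rw [hself b0, hself b1, hself b2, hself b3, hv02, hv03, hv12, hv13, hv23,
      hskew b0 b1, hskew b0 b2, hskew b0 b3, hskew b1 b2, hskew b1 b3, hskew b2 b3,
      hv02, hv03, hv12, hv13, hv23, ← hA]
    ring
  refine ⟨(-A) • (LinearMap.proj 2 : ((Fin 4) → ℝ) →ₗ[ℝ] ℝ), ?_, ?_⟩
  · intro x
    simp [uInvolution]
  · intro x y
    have h := key x y
    simp only [LinearMap.smul_apply, LinearMap.proj_apply, smul_eq_mul]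
    rw [hc2, h]
    ring
end

section
/- The 8-dimensional Lie algebra 𝔥 with structure as above (dσ = dτ = 0, dζ₁ = τ∧ζ₂, dζ₂ = -τ∧ζ₁, dη₁ = τ∧η₂, dη₂ = -τ∧η₁, dθ₁ = -ζ₁∧η₁ + ζ₂∧η₂, dθ₂ = -ζ₁∧η₂ - ζ₂∧η₁) admits no invariant symplectic form: there is no closed ω ∈ Λ²𝔥* that is nondegenerate as a bilinear form on 𝔥. -/
open scoped BigOperators

/-- `𝔥` is the `8`-dimensional Lie algebra `Fin 8 → ℝ` with bracket `c`; the conditions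
below express, via the Chevalley–Eilenberg differential `(dφ)(x,y) = -φ [x,y]`, that the
dual basis `σ, τ, ζ₁, ζ₂, η₁, η₂, θ₁, θ₂` (coordinates `0,…,7`) satisfies `dσ = dτ = 0`,
`dζ₁ = τ∧ζ₂`, `dζ₂ = -τ∧ζ₁`, `dη₁ = τ∧η₂`, `dη₂ = -τ∧η₁`,
`dθ₁ = -ζ₁∧η₁ + ζ₂∧η₂`, `dθ₂ = -ζ₁∧η₂ - ζ₂∧η₁`. -/
def IsLieAlgebraH (c : (Fin 8 → ℝ) →ₗ[ℝ] (Fin 8 → ℝ) →ₗ[ℝ] (Fin 8 → ℝ)) : Prop :=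
  (∀ x, c x x = 0) ∧
  (∀ x y, c x y 0 = 0) ∧
  (∀ x y, c x y 1 = 0) ∧
  (∀ x y : Fin 8 → ℝ, -(c x y 2) = x 1 * y 3 - x 3 * y 1) ∧
  (∀ x y : Fin 8 → ℝ, -(c x y 3) = -(x 1 * y 2 - x 2 * y 1)) ∧
  (∀ x y : Fin 8 → ℝ, -(c x y 4) = x 1 * y 5 - x 5 * y 1) ∧
  (∀ x y : Fin 8 → ℝ, -(c x y 5) = -(x 1 * y 4 - x 4 * y 1)) ∧
  (∀ x y : Fin 8 → ℝ, -(c x y 6) = -(x 2 * y 4 - x 4 * y 2) + (x 3 * y 5 - x 5 * y 3)) ∧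
  (∀ x y : Fin 8 → ℝ, -(c x y 7) = -(x 2 * y 5 - x 5 * y 2) - (x 3 * y 4 - x 4 * y 3))

/-- Standard basis vectors of `Fin 8 → ℝ`. -/
private def Ee : Fin 8 → Fin 8 → ℝ := fun i j => if i = j then 1 else 0

private lemma upd_zero {α : Type*} (x y a : α) : Function.update ![x, y] 0 a = ![a, y] := by
  funext i; fin_cases i <;> simp

/-- The `8`-dimensional Lie algebra `𝔥` admits no invariant symplectic form: there is no
closed `ω ∈ Λ²𝔥*` that is nondegenerate as a bilinear form on `𝔥`. -/
theorem h_no_invariant_symplectic_form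
    (c : (Fin 8 → ℝ) →ₗ[ℝ] (Fin 8 → ℝ) →ₗ[ℝ] (Fin 8 → ℝ))
    (hc : IsLieAlgebraH c) :
    ¬∃ ω : (Fin 8 → ℝ) [⋀^Fin 2]→ₗ[ℝ] ℝ, IsCEClosed c ω ∧
      ∀ x : Fin 8 → ℝ, (∀ y : Fin 8 → ℝ, ω ![x, y] = 0) → x = 0 := by
  obtain ⟨hself, h0, h1, h2, h3, h4, h5, h6', h7'⟩ := hc
  rintro ⟨ω, hωc, hnd⟩
  have hω : ∀ x y z : Fin 8 → ℝ,
      -ω ![c x y, z] + ω ![c x z, y] - ω ![c y z, x] = 0 := hωc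
  have hcoord : ∀ x y : Fin 8 → ℝ,
      c x y 2 = -(x 1 * y 3 - x 3 * y 1) ∧ c x y 3 = x 1 * y 2 - x 2 * y 1 ∧
      c x y 4 = -(x 1 * y 5 - x 5 * y 1) ∧ c x y 5 = x 1 * y 4 - x 4 * y 1 ∧
      c x y 6 = (x 2 * y 4 - x 4 * y 2) - (x 3 * y 5 - x 5 * y 3) ∧
      c x y 7 = (x 2 * y 5 - x 5 * y 2) + (x 3 * y 4 - x 4 * y 3) := by
    intro x y
    have a2 := h2 x y; have a3 := h3 x y; have a4 := h4 x y
    have a5 := h5 x y; have a6 := h6' x y; have a7 := h7' x y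
    refine ⟨by linarith, by linarith, by linarith, by linarith, by linarith, by linarith⟩
  -- bracket values on basis vectors
  have czero0 : ∀ y, c (Ee 0) y = 0 := by
    intro y; funext i
    obtain ⟨a2, a3, a4, a5, a6, a7⟩ := hcoord (Ee 0) y
    fin_cases i
    · simpa using h0 _ _
    · simpa using h1 _ _
    · simp [Ee] at a2 ⊢; linarith
    · simp [Ee] at a3 ⊢; linarith
    · simp [Ee] at a4 ⊢; linarith
    · simp [Ee] at a5 ⊢; linarith
    · simp [Ee] at a6 ⊢; linarith
    · simp [Ee] at a7 ⊢; linarith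
  have czero6 : ∀ x, c x (Ee 6) = 0 := by
    intro x; funext i
    obtain ⟨a2, a3, a4, a5, a6, a7⟩ := hcoord x (Ee 6)
    fin_cases i
    · simpa using h0 _ _
    · simpa using h1 _ _
    · simp [Ee] at a2 ⊢; linarith
    · simp [Ee] at a3 ⊢; linarith
    · simp [Ee] at a4 ⊢; linarith
    · simp [Ee] at a5 ⊢; linarith
    · simp [Ee] at a6 ⊢; linarith
    · simp [Ee] at a7 ⊢; linarith
  have czero7 : ∀ x, c x (Ee 7) = 0 := by
    intro x; funext i
    obtain ⟨a2, a3, a4, a5, a6, a7⟩ := hcoord x (Ee 7)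
    fin_cases i
    · simpa using h0 _ _
    · simpa using h1 _ _
    · simp [Ee] at a2 ⊢; linarith
    · simp [Ee] at a3 ⊢; linarith
    · simp [Ee] at a4 ⊢; linarith
    · simp [Ee] at a5 ⊢; linarith
    · simp [Ee] at a6 ⊢; linarith
    · simp [Ee] at a7 ⊢; linarith
  have hbrfin : ∀ p q : Fin 8, ∀ v : Fin 8 → ℝ,
      (∀ i : Fin 8, c (Ee p) (Ee q) i = v i) → c (Ee p) (Ee q) = v :=
    fun _ _ _ h => funext h
  have hbr12 : c (Ee 1) (Ee 2) = Ee 3 := by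
    funext i
    obtain ⟨a2, a3, a4, a5, a6, a7⟩ := hcoord (Ee 1) (Ee 2)
    fin_cases i
    · simpa [Ee] using h0 _ _
    · simpa [Ee] using h1 _ _
    · simp [Ee] at a2 ⊢; linarith
    · simp [Ee] at a3 ⊢; linarith
    · simp [Ee] at a4 ⊢; linarith
    · simp [Ee] at a5 ⊢; linarith
    · simp [Ee] at a6 ⊢; linarith
    · simp [Ee] at a7 ⊢; linarith
  have hbr13 : c (Ee 1) (Ee 3) = -(Ee 2) := by
    funext i
    obtain ⟨a2, a3, a4, a5, a6, a7⟩ := hcoord (Ee 1) (Ee 3)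
    fin_cases i
    · simpa [Ee] using h0 _ _
    · simpa [Ee] using h1 _ _
    · simp [Ee] at a2 ⊢; linarith
    · simp [Ee] at a3 ⊢; linarith
    · simp [Ee] at a4 ⊢; linarith
    · simp [Ee] at a5 ⊢; linarith
    · simp [Ee] at a6 ⊢; linarith
    · simp [Ee] at a7 ⊢; linarith
  have hbr14 : c (Ee 1) (Ee 4) = Ee 5 := by
    funext i
    obtain ⟨a2, a3, a4, a5, a6, a7⟩ := hcoord (Ee 1) (Ee 4)
    fin_cases i
    · simpa [Ee] using h0 _ _
    · simpa [Ee] using h1 _ _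
    · simp [Ee] at a2 ⊢; linarith
    · simp [Ee] at a3 ⊢; linarith
    · simp [Ee] at a4 ⊢; linarith
    · simp [Ee] at a5 ⊢; linarith
    · simp [Ee] at a6 ⊢; linarith
    · simp [Ee] at a7 ⊢; linarith
  have hbr15 : c (Ee 1) (Ee 5) = -(Ee 4) := by
    funext i
    obtain ⟨a2, a3, a4, a5, a6, a7⟩ := hcoord (Ee 1) (Ee 5)
    fin_cases i
    · simpa [Ee] using h0 _ _
    · simpa [Ee] using h1 _ _
    · simp [Ee] at a2 ⊢; linarith
    · simp [Ee] at a3 ⊢; linarith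
    · simp [Ee] at a4 ⊢; linarith
    · simp [Ee] at a5 ⊢; linarith
    · simp [Ee] at a6 ⊢; linarith
    · simp [Ee] at a7 ⊢; linarith
  have hbr24 : c (Ee 2) (Ee 4) = Ee 6 := by
    funext i
    obtain ⟨a2, a3, a4, a5, a6, a7⟩ := hcoord (Ee 2) (Ee 4)
    fin_cases i
    · simpa [Ee] using h0 _ _
    · simpa [Ee] using h1 _ _
    · simp [Ee] at a2 ⊢; linarith
    · simp [Ee] at a3 ⊢; linarith
    · simp [Ee] at a4 ⊢; linarith
    · simp [Ee] at a5 ⊢; linarith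
    · simp [Ee] at a6 ⊢; linarith
    · simp [Ee] at a7 ⊢; linarith
  have hbr25 : c (Ee 2) (Ee 5) = Ee 7 := by
    funext i
    obtain ⟨a2, a3, a4, a5, a6, a7⟩ := hcoord (Ee 2) (Ee 5)
    fin_cases i
    · simpa [Ee] using h0 _ _
    · simpa [Ee] using h1 _ _
    · simp [Ee] at a2 ⊢; linarith
    · simp [Ee] at a3 ⊢; linarith
    · simp [Ee] at a4 ⊢; linarith
    · simp [Ee] at a5 ⊢; linarith
    · simp [Ee] at a6 ⊢; linarith
    · simp [Ee] at a7 ⊢; linarith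
  -- linearity of ω in the first slot
  have hadd : ∀ a b y : Fin 8 → ℝ, ω ![a + b, y] = ω ![a, y] + ω ![b, y] := by
    intro a b y
    rw [show (![a + b, y] : Fin 2 → Fin 8 → ℝ) = Function.update ![a, y] 0 (a + b) from
      (upd_zero a y (a + b)).symm]
    rw [AlternatingMap.map_update_add, upd_zero, upd_zero]
  have hsmul : ∀ (r : ℝ) (a y : Fin 8 → ℝ), ω ![r • a, y] = r * ω ![a, y] := by
    intro r a y
    rw [show (![r • a, y] : Fin 2 → Fin 8 → ℝ) = Function.update ![a, y] 0 (r • a) from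
      (upd_zero a y (r • a)).symm]
    rw [AlternatingMap.map_update_smul, upd_zero]; simp
  have hzero : ∀ y : Fin 8 → ℝ, ω ![0, y] = 0 := by
    intro y
    exact ω.map_coord_zero (m := ![0, y]) 0 (by simp)
  have hneg : ∀ a y : Fin 8 → ℝ, ω ![-a, y] = -ω ![a, y] := by
    intro a y
    have := hsmul (-1) a y
    simpa using this
  have hself0 : ∀ x : Fin 8 → ℝ, ω ![x, x] = 0 := by
    intro x
    exact ω.map_eq_zero_of_eq ![x, x] (i := 0) (j := 1) (by simp) (by decide)
  -- antisymmetry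
  have hanti : ∀ x y : Fin 8 → ℝ, ω ![y, x] = -ω ![x, y] := by
    intro x y
    have hxy : ω ![x + y, x + y] = 0 := hself0 _
    have e1 : ω ![x + y, x + y] = ω ![x, x + y] + ω ![y, x + y] := hadd x y _
    have e2 : ω ![x + y, x] = ω ![x, x] + ω ![y, x] := hadd x y x
    have e3 : ω ![x + y, y] = ω ![x, y] + ω ![y, y] := hadd x y y
    have e4 : ω ![x, x + y] = -ω ![x + y, x] + (ω ![x + y, x] + ω ![x, x + y]) := by ring
    -- expand second slot by antisymmetry trick instead: use hadd on swapped
    have k1 : ω ![x + y, x + y] = ω ![x + y, x] + ω ![x + y, y] := by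
      have hx2 : (![x + y, x + y] : Fin 2 → Fin 8 → ℝ) =
          Function.update ![x + y, x] 1 (x + y) := by
        funext i; fin_cases i <;> simp
      rw [hx2, AlternatingMap.map_update_add]
      congr 1 <;> · congr 1; funext i; fin_cases i <;> simp
    rw [k1, e2, e3, hself0, hself0] at hxy
    linarith
  -- closedness consequences on basis pairs
  have f60 : ω ![Ee 6, Ee 0] = 0 := by
    have h := hω (Ee 0) (Ee 2) (Ee 4)
    rw [czero0, czero0, hbr24, hzero, hzero] at h
    linarith
  have f70 : ω ![Ee 7, Ee 0] = 0 := by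
    have h := hω (Ee 0) (Ee 2) (Ee 5)
    rw [czero0, czero0, hbr25, hzero, hzero] at h
    linarith
  have f26 : ω ![Ee 2, Ee 6] = 0 := by
    have h := hω (Ee 1) (Ee 3) (Ee 6)
    rw [czero6, czero6, hbr13, hzero, hzero, hneg] at h
    linarith
  have f27 : ω ![Ee 2, Ee 7] = 0 := by
    have h := hω (Ee 1) (Ee 3) (Ee 7)
    rw [czero7, czero7, hbr13, hzero, hzero, hneg] at h
    linarith
  have f36 : ω ![Ee 3, Ee 6] = 0 := by
    have h := hω (Ee 1) (Ee 2) (Ee 6)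
    rw [czero6, czero6, hbr12, hzero, hzero] at h
    linarith
  have f37 : ω ![Ee 3, Ee 7] = 0 := by
    have h := hω (Ee 1) (Ee 2) (Ee 7)
    rw [czero7, czero7, hbr12, hzero, hzero] at h
    linarith
  have f46 : ω ![Ee 4, Ee 6] = 0 := by
    have h := hω (Ee 1) (Ee 5) (Ee 6)
    rw [czero6, czero6, hbr15, hzero, hzero, hneg] at h
    linarith
  have f47 : ω ![Ee 4, Ee 7] = 0 := by
    have h := hω (Ee 1) (Ee 5) (Ee 7)
    rw [czero7, czero7, hbr15, hzero, hzero, hneg] at h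
    linarith
  have f56 : ω ![Ee 5, Ee 6] = 0 := by
    have h := hω (Ee 1) (Ee 4) (Ee 6)
    rw [czero6, czero6, hbr14, hzero, hzero] at h
    linarith
  have f57 : ω ![Ee 5, Ee 7] = 0 := by
    have h := hω (Ee 1) (Ee 4) (Ee 7)
    rw [czero7, czero7, hbr14, hzero, hzero] at h
    linarith
  have f67 : ω ![Ee 6, Ee 7] = 0 := by
    have h := hω (Ee 2) (Ee 4) (Ee 7)
    rw [czero7, czero7, hbr24, hzero, hzero] at h
    linarith
  -- row expansions
  have row : ∀ k : Fin 8, (∀ i : Fin 8, i ≠ 1 → ω ![Ee k, Ee i] = 0) →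
      ∀ y : Fin 8 → ℝ, ω ![Ee k, y] = ω ![Ee k, Ee 1] * y 1 := by
    intro k hk y
    have hy : y = ∑ i, y i • Ee i := pi_eq_sum_univ y
    have expand : ω ![Ee k, y] = ∑ i : Fin 8, y i * ω ![Ee k, Ee i] := by
      have step : ∀ (n : ℕ) (s : Finset (Fin 8)),
          ω ![Ee k, ∑ i ∈ s, y i • Ee i] = ∑ i ∈ s, y i * ω ![Ee k, Ee i] := by
        intro n s
        induction s using Finset.induction with
        | empty =>
            rw [Finset.sum_empty, Finset.sum_empty, hanti, hzero]
            ring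
        | insert j t hj ih =>
            rw [Finset.sum_insert hj, Finset.sum_insert hj, ← ih]
            have h1 : ω ![Ee k, y j • Ee j + ∑ i ∈ t, y i • Ee i] =
                ω ![Ee k, y j • Ee j] + ω ![Ee k, ∑ i ∈ t, y i • Ee i] := by
              rw [hanti, hadd, hanti (Ee k) (y j • Ee j), hanti (Ee k)]
              ring
            rw [h1]
            congr 1
            rw [hanti, hsmul, hanti (Ee k) (Ee j)]
            ring
      conv_lhs => rw [hy]
      exact step 0 Finset.univ
    rw [expand, Fin.sum_univ_eight]
    rw [hk 0 (by decide), hk 2 (by decide), hk 3 (by decide), hk 4 (by decide),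
      hk 5 (by decide), hk 6 (by decide), hk 7 (by decide)]
    ring
  have row6 : ∀ y : Fin 8 → ℝ, ω ![Ee 6, y] = ω ![Ee 6, Ee 1] * y 1 := by
    apply row
    intro i hi
    fin_cases i
    · exact f60
    · exact absurd rfl hi
    · show ω ![Ee 6, Ee 2] = 0; rw [hanti, f26]; ring
    · show ω ![Ee 6, Ee 3] = 0; rw [hanti, f36]; ring
    · show ω ![Ee 6, Ee 4] = 0; rw [hanti, f46]; ring
    · show ω ![Ee 6, Ee 5] = 0; rw [hanti, f56]; ring
    · exact hself0 _
    · exact f67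
  have row7 : ∀ y : Fin 8 → ℝ, ω ![Ee 7, y] = ω ![Ee 7, Ee 1] * y 1 := by
    apply row
    intro i hi
    fin_cases i
    · exact f70
    · exact absurd rfl hi
    · show ω ![Ee 7, Ee 2] = 0; rw [hanti, f27]; ring
    · show ω ![Ee 7, Ee 3] = 0; rw [hanti, f37]; ring
    · show ω ![Ee 7, Ee 4] = 0; rw [hanti, f47]; ring
    · show ω ![Ee 7, Ee 5] = 0; rw [hanti, f57]; ring
    · show ω ![Ee 7, Ee 6] = 0; rw [hanti, f67]; ring
    · exact hself0 _
  set b6 : ℝ := ω ![Ee 6, Ee 1] with hb6def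
  set b7 : ℝ := ω ![Ee 7, Ee 1] with hb7def
  -- the kernel vector
  have hker : ∀ y : Fin 8 → ℝ, ω ![b7 • Ee 6 - b6 • Ee 7, y] = 0 := by
    intro y
    have e1 : b7 • Ee 6 - b6 • Ee 7 = b7 • Ee 6 + (-b6) • Ee 7 := by
      rw [sub_eq_add_neg, ← neg_smul]
    rw [e1, hadd, hsmul, hsmul, row6 y, row7 y]
    ring
  have hv0 := hnd _ hker
  have hb7 : b7 = 0 := by
    have := congrFun hv0 6
    simp [Ee] at this
    linarith
  have hb6 : b6 = 0 := by
    have := congrFun hv0 7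
    simp [Ee] at this
    linarith
  have hker6 : ∀ y : Fin 8 → ℝ, ω ![Ee 6, y] = 0 := by
    intro y
    rw [row6 y, hb6]
    ring
  have h60 := hnd _ hker6
  have : (1 : ℝ) = 0 := by
    have h := congrFun h60 6
    simp [Ee] at h
  exact one_ne_zero this
end

section
/- Let 𝔤 be the 6-dimensional Lie algebra of the complex Heisenberg group U₃(ℂ) viewed as a real Lie algebra, with dual basis x₁, x₂, y₁, y₂, z₁, z₂ satisfying dx_i = dy_i = 0, dz₁ = -x₁∧y₁ + x₂∧y₂, dz₂ = -x₁∧y₂ - x₂∧y₁. Then there exists a closed 2-form ω ∈ Λ²𝔤* with ω³ ≠ 0 (e.g., ω = x₁∧z₁ + y₁∧z₂ + x₂∧y₂). -/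
open scoped BigOperators

/-- `𝔤` is the Lie algebra of the complex Heisenberg group `U₃(ℂ)` viewed as a real Lie
algebra `Fin 6 → ℝ` with bracket `c`; the conditions express, via the Chevalley–Eilenberg
differential `(dφ)(x,y) = -φ [x,y]`, that the dual basis `x₁, x₂, y₁, y₂, z₁, z₂`
(coordinates `0,…,5`) satisfies `dxᵢ = dyᵢ = 0`, `dz₁ = -x₁∧y₁ + x₂∧y₂`,
`dz₂ = -x₁∧y₂ - x₂∧y₁`. -/
def IsComplexHeisenberg (c : (Fin 6 → ℝ) →ₗ[ℝ] (Fin 6 → ℝ) →ₗ[ℝ] (Fin 6 → ℝ)) : Prop :=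
  (∀ x, c x x = 0) ∧
  (∀ x y, c x y 0 = 0) ∧
  (∀ x y, c x y 1 = 0) ∧
  (∀ x y, c x y 2 = 0) ∧
  (∀ x y, c x y 3 = 0) ∧
  (∀ x y : Fin 6 → ℝ, -(c x y 4) = -(x 0 * y 2 - x 2 * y 0) + (x 1 * y 3 - x 3 * y 1)) ∧
  (∀ x y : Fin 6 → ℝ, -(c x y 5) = -(x 0 * y 3 - x 3 * y 0) - (x 1 * y 2 - x 2 * y 1))


namespace IwasawaAux

open Equiv Equiv.Perm

/-- The explicit closed 2-form `x₁∧z₁ - x₂∧z₂ + y₁∧y₂` as a bilinear expression. -/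
def ωfun (u w : Fin 6 → ℝ) : ℝ :=
  u 0 * w 4 - u 4 * w 0 - (u 1 * w 5 - u 5 * w 1) + u 2 * w 3 - u 3 * w 2

noncomputable def ω0 : (Fin 6 → ℝ) [⋀^Fin 2]→ₗ[ℝ] ℝ where
  toFun v := ωfun (v 0) (v 1)
  map_update_add' v i a b := by
    fin_cases i <;> simp [ωfun, Function.update] <;> ring
  map_update_smul' v i r a := by
    fin_cases i <;> simp [ωfun, Function.update, smul_eq_mul] <;> ring
  map_eq_zero_of_eq' v i j hv hij := by
    fin_cases i <;> fin_cases j <;> simp_all [ωfun] <;> ring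

@[simp] lemma ω0_apply (w : Fin 2 → (Fin 6 → ℝ)) : ω0 w = ωfun (w 0) (w 1) := rfl

abbrev fp : Fin 3 × Fin 2 ≃ Fin (3 * 2) := finProdFinEquiv

/-- Integer Gram matrix: block diagonal with blocks `[[0,1],[-1,0]]`. -/
def Jz : Fin (3 * 2) → Fin (3 * 2) → ℤ :=
  ![![0,1,0,0,0,0], ![-1,0,0,0,0,0], ![0,0,0,1,0,0],
    ![0,0,-1,0,0,0], ![0,0,0,0,0,1], ![0,0,0,0,-1,0]]

def F (σ : Perm (Fin (3 * 2))) : ℤ :=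
  (Perm.sign σ : ℤ) * ∏ i : Fin 3, Jz (σ (fp (i, 0))) (σ (fp (i, 1)))

def g (te : Perm (Fin 3) × (Fin 3 → Perm (Fin 2))) : Perm (Fin (3 * 2)) :=
  fp.permCongr (Equiv.prodShear te.1 te.2)

lemma g_apply (τ : Perm (Fin 3)) (ε : Fin 3 → Perm (Fin 2)) (i : Fin 3) (j : Fin 2) :
    g (τ, ε) (fp (i, j)) = fp (τ i, ε i j) := by
  simp [g, Equiv.permCongr_apply, Equiv.prodShear]

lemma g_inj : Function.Injective g := by
  rintro ⟨τ, ε⟩ ⟨τ', ε'⟩ h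
  have h' : ∀ i j, fp ((τ i : Fin 3), ε i j) = fp (τ' i, ε' i j) := by
    intro i j
    rw [← g_apply τ ε i j, ← g_apply τ' ε' i j, h]
  have h'' : ∀ i j, (τ i, ε i j) = (τ' i, ε' i j) := fun i j => fp.injective (h' i j)
  refine Prod.ext ?_ ?_
  · exact Equiv.ext fun i => congrArg Prod.fst (h'' i 0)
  · exact funext fun i => Equiv.ext fun j => congrArg Prod.snd (h'' i j)

lemma sign_g (τ : Perm (Fin 3)) (ε : Fin 3 → Perm (Fin 2)) :
    Perm.sign (g (τ, ε)) = ∏ i : Fin 3, Perm.sign (ε i) := by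
  have hdec : Equiv.prodShear τ ε =
      (Equiv.prodCongrLeft fun _ : Fin 2 => τ) * (Equiv.prodCongrRight ε) := by
    apply Equiv.ext
    rintro ⟨i, j⟩
    rfl
  rw [g, Equiv.Perm.sign_permCongr, hdec, map_mul, Equiv.Perm.sign_prodCongrLeft,
    Equiv.Perm.sign_prodCongrRight]
  rw [Finset.prod_const]
  simp [pow_succ, Int.units_mul_self]

lemma Jz_g : ∀ (k : Fin 3) (e : Perm (Fin 2)),
    Jz (fp (k, e 0)) (fp (k, e 1)) = ((Perm.sign e : ℤˣ) : ℤ) := by decide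

lemma F_g (te : Perm (Fin 3) × (Fin 3 → Perm (Fin 2))) : F (g te) = 1 := by
  obtain ⟨τ, ε⟩ := te
  rw [F]
  have : ∀ i : Fin 3, Jz (g (τ, ε) (fp (i, 0))) (g (τ, ε) (fp (i, 1)))
      = ((Perm.sign (ε i) : ℤˣ) : ℤ) := by
    intro i; rw [g_apply, g_apply, Jz_g]
  rw [Finset.prod_congr rfl fun i _ => this i, sign_g]
  rw [← Units.coe_prod _ _, ← Units.val_mul, ← Units.val_one]
  congr 1
  rw [← Finset.prod_mul_distrib]
  exact Finset.prod_eq_one fun i _ => Int.units_mul_self _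

lemma Jz_ne_zero {a b : Fin (3 * 2)} (h : Jz a b ≠ 0) :
    (fp.symm b).1 = (fp.symm a).1 ∧ (fp.symm b).2 ≠ (fp.symm a).2 := by
  revert h; revert a b; decide

lemma fin2_other {a b : Fin 2} (h : b ≠ a) :
    (if a = 0 then Equiv.refl (Fin 2) else Equiv.swap 0 1) 1 = b := by
  revert h; revert a b; decide

lemma fin2_self (a : Fin 2) :
    (if a = 0 then Equiv.refl (Fin 2) else Equiv.swap 0 1) 0 = a := by
  revert a; decide

lemma F_eq_zero {σ : Perm (Fin (3 * 2))} (hσ : σ ∉ Set.range g) : F σ = 0 := by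
  by_contra hF
  apply hσ
  have hprod : ∀ i : Fin 3, Jz (σ (fp (i, 0))) (σ (fp (i, 1))) ≠ 0 := by
    intro i
    intro h0
    exact hF (by rw [F, Finset.prod_eq_zero (Finset.mem_univ i) h0, mul_zero])
  set τ0 : Fin 3 → Fin 3 := fun i => (fp.symm (σ (fp (i, 0)))).1 with hτ0
  set η : Fin 3 → Fin 2 := fun i => (fp.symm (σ (fp (i, 0)))).2 with hη
  set ε : Fin 3 → Perm (Fin 2) :=
    fun i => if η i = 0 then Equiv.refl (Fin 2) else Equiv.swap 0 1 with hε
  have key : ∀ i : Fin 3, ∀ j : Fin 2, σ (fp (i, j)) = fp (τ0 i, ε i j) := by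
    intro i j
    have hb := Jz_ne_zero (hprod i)
    have : fp.symm (σ (fp (i, j))) = (τ0 i, ε i j) := by
      fin_cases j
      · exact Prod.ext rfl (fin2_self (η i)).symm
      · exact Prod.ext hb.1 (fin2_other hb.2).symm
    rw [← this, Equiv.apply_symm_apply]
  have hτinj : Function.Injective τ0 := by
    intro i i' h
    by_cases hpos : η i = η i'
    · have : σ (fp (i, 0)) = σ (fp (i', 0)) := by
        rw [key i 0, key i' 0, h]
        congr 1
        exact Prod.ext rfl (by rw [hε]; simp only [hpos])
      have := fp.injective (σ.injective this)
      exact (Prod.ext_iff.mp this).1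
    · exfalso
      have h1 : ε i 1 = η i' := fin2_other (Ne.symm hpos)
      have : σ (fp (i, 1)) = σ (fp (i', 0)) := by
        rw [key i 1, key i' 0, h, h1, fin2_self]
      have := (Prod.ext_iff.mp (fp.injective (σ.injective this))).2
      exact one_ne_zero this
  refine ⟨(Equiv.ofBijective τ0 ((Fintype.bijective_iff_injective_and_card τ0).mpr
    ⟨hτinj, rfl⟩), ε), ?_⟩
  ext x
  obtain ⟨⟨i, j⟩, rfl⟩ := fp.surjective x
  rw [g_apply, key i j]
  rfl

lemma sum_F : (∑ σ : Perm (Fin (3 * 2)), F σ) =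
    (Fintype.card (Perm (Fin 3) × (Fin 3 → Perm (Fin 2))) : ℤ) := by
  rw [← Finset.sum_subset (Finset.subset_univ (Finset.image g Finset.univ))
    (fun σ _ hσ => F_eq_zero (by simpa [Set.range, Finset.mem_image] using hσ))]
  rw [Finset.sum_image fun a _ b _ h => g_inj h]
  rw [Finset.sum_congr rfl fun te _ => F_g te]
  rw [Finset.sum_const, Finset.card_univ, nsmul_eq_mul, mul_one]

/-- Integer coordinates of the chosen 6 vectors: standard basis vectors in the order
`x₁, z₁, z₂, x₂, y₁, y₂`. -/
def Vz : Fin (3 * 2) → (Fin 6 → ℤ) :=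
  ![![1,0,0,0,0,0], ![0,0,0,0,1,0], ![0,0,0,0,0,1],
    ![0,1,0,0,0,0], ![0,0,1,0,0,0], ![0,0,0,1,0,0]]

/-- The chosen 6 vectors. -/
def vv : Fin (3 * 2) → (Fin 6 → ℝ) := fun a k => ((Vz a k : ℤ) : ℝ)

lemma hVz : ∀ a b : Fin (3 * 2),
    Vz a 0 * Vz b 4 - Vz a 4 * Vz b 0 - (Vz a 1 * Vz b 5 - Vz a 5 * Vz b 1)
      + Vz a 2 * Vz b 3 - Vz a 3 * Vz b 2 = Jz a b := by decide

lemma ωfun_vv (a b : Fin (3 * 2)) : ωfun (vv a) (vv b) = ((Jz a b : ℤ) : ℝ) := by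
  rw [← hVz a b]
  push_cast [ωfun, vv]
  ring

end IwasawaAux

/-- There exists a closed `2`-form `ω ∈ Λ²𝔤*` with `ω³ ≠ 0` (e.g.
`ω = x₁∧z₁ + y₁∧z₂ + x₂∧y₂`), i.e. the Iwasawa Lie algebra carries an invariant
symplectic form. -/
theorem complexHeisenberg_symplectic
    (c : (Fin 6 → ℝ) →ₗ[ℝ] (Fin 6 → ℝ) →ₗ[ℝ] (Fin 6 → ℝ))
    (hc : IsComplexHeisenberg c) :
    ∃ ω : (Fin 6 → ℝ) [⋀^Fin 2]→ₗ[ℝ] ℝ,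
      IsCEClosed c ω ∧ ∃ v : Fin (3 * 2) → (Fin 6 → ℝ), wedgePow ⇑ω 3 v ≠ 0 := by
  obtain ⟨halt, h0, h1, h2, h3, h4, h5⟩ := hc
  refine ⟨IwasawaAux.ω0, ?_, IwasawaAux.vv, ?_⟩
  · intro x y z
    have e4 : ∀ a b : Fin 6 → ℝ,
        c a b 4 = (a 0 * b 2 - a 2 * b 0) - (a 1 * b 3 - a 3 * b 1) :=
      fun a b => by linear_combination -h4 a b
    have e5 : ∀ a b : Fin 6 → ℝ,
        c a b 5 = (a 0 * b 3 - a 3 * b 0) + (a 1 * b 2 - a 2 * b 1) :=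
      fun a b => by linear_combination -h5 a b
    simp only [IwasawaAux.ω0_apply, Matrix.cons_val_zero, Matrix.cons_val_one,
      Matrix.head_cons, IwasawaAux.ωfun, h0, h1, h2, h3, e4, e5]
    ring
  · have hcast : wedgePow ⇑IwasawaAux.ω0 3 IwasawaAux.vv
        = ((∑ σ : Equiv.Perm (Fin (3 * 2)), IwasawaAux.F σ : ℤ) : ℝ) := by
      rw [wedgePow]
      push_cast
      refine Finset.sum_congr rfl fun σ _ => ?_
      simp only [IwasawaAux.ω0_apply, Matrix.cons_val_zero, Matrix.cons_val_one,
        Matrix.head_cons, IwasawaAux.ωfun_vv, IwasawaAux.F]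
      push_cast
      ring
    rw [hcast, IwasawaAux.sum_F]
    simp
end
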